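/- The 2D Fourier transform of the function x ↦ j₀(k|x|) on ℝ² is [j₀(k|·|)]^(ξ) = (2π/(k√(k²−|ξ|²))) χ_{B(0,k)}(ξ), understood as the density of the pushforward of the surface measure of S(0,k) under vertical projection, scaled by 1/(4πk²) · (2π)². -/

import Mathlib

open MeasureTheory Complex Filter
open scoped Real RealInnerProductSpace

noncomputable section

abbrev R2 := EuclideanSpace ℝ (Fin 2)

/-- The zeroth spherical Bessel function `j₀(t) = sin t / t`, with `j₀(0) = 1`. -/
def j0 (t : ℝ) : ℝ := if t = 0 then 1 else Real.sin t / t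

lemma aux_img (c : ℝ) (hc : 0 < c) :
    (fun θ => c * Real.sin θ) '' Set.Ioo (-(π/2)) (π/2) = Set.Ioo (-c) c := by
  ext t
  simp only [Set.mem_image, Set.mem_Ioo]
  constructor
  · rintro ⟨θ, hθ, rfl⟩
    have h1 : Real.sin θ < 1 := by
      have := Real.strictMonoOn_sin ⟨hθ.1.le, hθ.2.le⟩
        ⟨by linarith [Real.pi_pos], le_refl _⟩ hθ.2
      simpa [Real.sin_pi_div_two] using this
    have h2 : -1 < Real.sin θ := by
      have := Real.strictMonoOn_sin (Set.mem_Icc.2 ⟨le_refl _, by linarith [Real.pi_pos]⟩)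
        ⟨hθ.1.le, hθ.2.le⟩ hθ.1
      simpa [Real.sin_pi_div_two] using this
    constructor <;> nlinarith
  · intro ht
    have h1 : -1 < t / c := by rw [lt_div_iff₀ hc]; linarith [ht.1]
    have h2 : t / c < 1 := by rw [div_lt_iff₀ hc]; linarith [ht.2]
    refine ⟨Real.arcsin (t / c),
      ⟨Real.neg_pi_div_two_lt_arcsin.2 h1, Real.arcsin_lt_pi_div_two.2 h2⟩, ?_⟩
    rw [Real.sin_arcsin h1.le h2.le]
    field_simp

lemma aux_sqrt_int (c : ℝ) (hc : 0 < c) :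
    IntegrableOn (fun t : ℝ => 1 / Real.sqrt (c^2 - t^2)) (Set.Ioo (-c) c) ∧
    ∫ t in Set.Ioo (-c) c, 1 / Real.sqrt (c^2 - t^2) = π := by
  set s : Set ℝ := Set.Ioo (-(π/2)) (π/2) with hs_def
  have hs : MeasurableSet s := measurableSet_Ioo
  have hf' : ∀ θ ∈ s, HasDerivWithinAt (fun θ => c * Real.sin θ) (c * Real.cos θ) s θ :=
    fun θ _ => ((Real.hasDerivAt_sin θ).const_mul c).hasDerivWithinAt
  have hinj : Set.InjOn (fun θ => c * Real.sin θ) s := by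
    intro a ha b hb h
    have : Real.sin a = Real.sin b := by
      field_simp at h; exact h
    exact Real.injOn_sin (Set.mem_Icc.2 ⟨ha.1.le, ha.2.le⟩) (Set.mem_Icc.2 ⟨hb.1.le, hb.2.le⟩) this
  have himg := aux_img c hc
  have hval : ∀ θ ∈ s, |c * Real.cos θ| • (fun t : ℝ => 1 / Real.sqrt (c^2 - t^2)) (c * Real.sin θ)
      = 1 := by
    intro θ hθ
    have hcos : 0 < Real.cos θ := Real.cos_pos_of_mem_Ioo hθ
    have h1 : c^2 - (c * Real.sin θ)^2 = (c * Real.cos θ)^2 := by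
      have := Real.sin_sq_add_cos_sq θ; nlinarith
    have h2 : Real.sqrt (c^2 - (c * Real.sin θ)^2) = c * Real.cos θ := by
      rw [h1, Real.sqrt_sq (by positivity)]
    simp only [smul_eq_mul, h2, abs_of_pos (by positivity : (0:ℝ) < c * Real.cos θ)]
    field_simp
  constructor
  · rw [← himg, integrableOn_image_iff_integrableOn_abs_deriv_smul hs hf' hinj]
    exact (integrableOn_const measure_Ioo_lt_top.ne).congr_fun
      (fun θ hθ => (hval θ hθ).symm) hs
  · rw [← himg, integral_image_eq_integral_abs_deriv_smul hs hf' hinj]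
    rw [setIntegral_congr_fun hs hval]
    rw [hs_def, setIntegral_const, Real.volume_real_Ioo, smul_eq_mul, mul_one,
      max_eq_left (by linarith [Real.pi_pos])]
    ring

lemma aux_inner (k : ℝ) (hk : 0 < k) (u : ℝ) :
    Integrable (fun t : ℝ => if u^2 + t^2 < k^2 then 2*π/(k*Real.sqrt (k^2 - (u^2+t^2))) else 0) ∧
    ∫ t : ℝ, (if u^2 + t^2 < k^2 then 2*π/(k*Real.sqrt (k^2 - (u^2+t^2))) else 0)
      = if u^2 < k^2 then 2*π^2/k else 0 := by
  by_cases hu : u^2 < k^2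
  · set c : ℝ := Real.sqrt (k^2 - u^2) with hc_def
    have hc : 0 < c := Real.sqrt_pos.2 (by linarith)
    have hc2 : c^2 = k^2 - u^2 := Real.sq_sqrt (by linarith)
    have heq : (fun t : ℝ => if u^2 + t^2 < k^2 then 2*π/(k*Real.sqrt (k^2 - (u^2+t^2))) else 0)
        = Set.indicator (Set.Ioo (-c) c)
            (fun t => (2*π/k) * (1 / Real.sqrt (c^2 - t^2))) := by
      funext t
      have hmem : t ∈ Set.Ioo (-c) c ↔ u^2 + t^2 < k^2 := by
        rw [Set.mem_Ioo]
        constructor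
        · intro h; nlinarith [h.1, h.2]
        · intro h
          have : t^2 < c^2 := by nlinarith
          constructor <;> nlinarith
      by_cases h : u^2 + t^2 < k^2
      · rw [if_pos h, Set.indicator_of_mem (hmem.2 h)]
        have : c^2 - t^2 = k^2 - (u^2 + t^2) := by rw [hc2]; ring
        rw [this, div_mul_div_comm, mul_one]
      · rw [if_neg h, Set.indicator_of_notMem (fun hm => h (hmem.1 hm))]
    rw [heq]
    have hint := aux_sqrt_int c hc
    constructor
    · rw [integrable_indicator_iff measurableSet_Ioo]
      exact (hint.1.const_mul _)
    · rw [integral_indicator measurableSet_Ioo, if_pos hu, integral_const_mul, hint.2]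
      field_simp
  · have heq : (fun t : ℝ => if u^2 + t^2 < k^2 then 2*π/(k*Real.sqrt (k^2 - (u^2+t^2))) else 0)
        = fun _ => (0:ℝ) := by
      funext t; rw [if_neg (fun h => hu (by nlinarith))]
    rw [heq, if_neg hu]
    exact ⟨integrable_zero _ _ _, integral_zero _ _⟩

set_option maxHeartbeats 1000000 in
/-- The 2D Fourier transform of `x ↦ j₀(k|x|)` is `(2π/(k√(k²−|ξ|²))) χ_{B(0,k)}(ξ)`,
in the sense that `j₀(k|·|)` is the inverse Fourier transform of this density:
`j₀(k|x|) = (2π)⁻² ∫_{B(0,k)} (2π/(k√(k²−|ξ|²))) e^{i ξ·x} dξ`. -/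
theorem stmt17 (k : ℝ) (hk : 0 < k) (x : R2) :
    (j0 (k * ‖x‖) : ℂ) =
      ((2 * π : ℝ) : ℂ)⁻¹ ^ 2 *
        ∫ ξ : R2,
          Set.indicator (Metric.ball (0 : R2) k)
              (fun ξ => ((2 * π / (k * Real.sqrt (k ^ 2 - ‖ξ‖ ^ 2)) : ℝ) : ℂ)) ξ *
            Complex.exp (Complex.I * (⟪ξ, x⟫ : ℝ)) := by
  have hπ : (0:ℝ) < π := Real.pi_pos
  set a : ℝ := ‖x‖ with ha_def
  -- Step 1: rotate x to a multiple of the first basis vector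
  set y : R2 := EuclideanSpace.single (0 : Fin 2) a with hy_def
  have hy_norm : ‖y‖ = a := by
    rw [hy_def, EuclideanSpace.norm_single, Real.norm_eq_abs,
      _root_.abs_of_nonneg (norm_nonneg x)]
  have hrot : (∫ ξ : R2,
      Set.indicator (Metric.ball (0 : R2) k)
          (fun ξ => ((2 * π / (k * Real.sqrt (k ^ 2 - ‖ξ‖ ^ 2)) : ℝ) : ℂ)) ξ *
        Complex.exp (Complex.I * (⟪ξ, x⟫ : ℝ)))
      = ∫ ξ : R2,
      Set.indicator (Metric.ball (0 : R2) k)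
          (fun ξ => ((2 * π / (k * Real.sqrt (k ^ 2 - ‖ξ‖ ^ 2)) : ℝ) : ℂ)) ξ *
        Complex.exp (Complex.I * (⟪ξ, y⟫ : ℝ)) := by
    by_cases hxy : x = y
    · rw [← hxy]
    · set T : R2 ≃ₗᵢ[ℝ] R2 := Submodule.reflection (ℝ ∙ (x - y))ᗮ with hT_def
      have hTx : T x = y := Submodule.reflection_sub hy_norm.symm
      have hTsymm : T.symm x = y := by
        rw [hT_def, Submodule.reflection_symm]; exact hTx
      have hmp : MeasurePreserving T := T.measurePreserving
      rw [← hmp.integral_comp T.toHomeomorph.measurableEmbedding]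
      congr 1; funext ξ
      have h1 : ‖T ξ‖ = ‖ξ‖ := T.norm_map ξ
      have h2 : ⟪T ξ, x⟫ = ⟪ξ, y⟫ := by
        rw [← hTsymm, ← T.inner_map_map ξ (T.symm x), T.apply_symm_apply]
      have h3 : T ξ ∈ Metric.ball (0:R2) k ↔ ξ ∈ Metric.ball (0:R2) k := by
        simp [Metric.mem_ball, dist_zero_right, h1]
      rw [h2]
      by_cases hb : ξ ∈ Metric.ball (0:R2) k
      · rw [Set.indicator_of_mem (h3.2 hb), Set.indicator_of_mem hb, h1]
      · rw [Set.indicator_of_notMem (fun h => hb (h3.1 h)), Set.indicator_of_notMem hb]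
  rw [hrot]
  -- Step 2: transfer to ℝ × ℝ
  set G : ℝ × ℝ → ℂ := fun p =>
    ((if p.1^2 + p.2^2 < k^2 then 2*π/(k*Real.sqrt (k^2 - (p.1^2+p.2^2))) else 0 : ℝ) : ℂ) *
      Complex.exp (Complex.I * (a * p.1)) with hG_def
  have hcoord : (∫ ξ : R2,
      Set.indicator (Metric.ball (0 : R2) k)
          (fun ξ => ((2 * π / (k * Real.sqrt (k ^ 2 - ‖ξ‖ ^ 2)) : ℝ) : ℂ)) ξ *
        Complex.exp (Complex.I * (⟪ξ, y⟫ : ℝ)))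
      = ∫ p : ℝ × ℝ, G p := by
    have E : ℝ × ℝ ≃ᵐ R2 :=
      MeasurableEquiv.finTwoArrow.symm.trans (MeasurableEquiv.toLp 2 (Fin 2 → ℝ))
    have hmp : MeasurePreserving
        (MeasurableEquiv.finTwoArrow.symm.trans (MeasurableEquiv.toLp 2 (Fin 2 → ℝ)))
        (volume : Measure (ℝ × ℝ)) (volume : Measure R2) :=
      ((EuclideanSpace.volume_preserving_symm_measurableEquiv_toLp (Fin 2)).symm).comp
        (volume_preserving_finTwoArrow ℝ).symm
    rw [← hmp.integral_comp']
    congr 1; funext p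
    set ξ : R2 := (MeasurableEquiv.finTwoArrow.symm.trans
      (MeasurableEquiv.toLp 2 (Fin 2 → ℝ))) p with hξ_def
    have hcoords : ξ 0 = p.1 ∧ ξ 1 = p.2 := by
      constructor <;>
      · rw [hξ_def]
        simp [MeasurableEquiv.trans_apply, MeasurableEquiv.coe_toLp,
          MeasurableEquiv.finTwoArrow]
    have hnorm2 : ‖ξ‖^2 = p.1^2 + p.2^2 := by
      rw [EuclideanSpace.norm_eq, Real.sq_sqrt (by positivity)]
      simp [Fin.sum_univ_two, hcoords.1, hcoords.2, sq_abs]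
    have hball : ξ ∈ Metric.ball (0:R2) k ↔ p.1^2 + p.2^2 < k^2 := by
      rw [Metric.mem_ball, dist_zero_right, ← hnorm2]
      constructor
      · intro h; nlinarith [norm_nonneg ξ]
      · intro h; nlinarith [norm_nonneg ξ]
    have hinner : ⟪ξ, y⟫ = a * p.1 := by
      rw [hy_def, EuclideanSpace.inner_single_right]
      simp [hcoords.1]
    rw [hG_def]
    simp only
    rw [hinner]
    by_cases hb : p.1^2 + p.2^2 < k^2
    · rw [Set.indicator_of_mem (hball.2 hb), if_pos hb, hnorm2]
      push_cast
      ring_nf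
    · rw [Set.indicator_of_notMem (fun h => hb (hball.1 h)), if_neg hb]
      simp
  rw [hcoord]
  -- Step 3: measurability and integrability of G
  have hS : MeasurableSet {p : ℝ × ℝ | p.1^2 + p.2^2 < k^2} := by
    apply measurableSet_lt (by fun_prop) measurable_const
  have hGmeas : AEStronglyMeasurable G volume := by
    apply Measurable.aestronglyMeasurable
    apply Measurable.mul
    · apply Measurable.comp Complex.measurable_ofReal
      apply Measurable.ite hS _ measurable_const
      apply Measurable.div measurable_const
      exact (measurable_const.mul ((measurable_const.sub
        ((measurable_fst.pow_const 2).add (measurable_snd.pow_const 2))).sqrt))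
    · exact (Complex.continuous_exp.comp (by continuity)).measurable
  have hnormG : ∀ p : ℝ × ℝ, ‖G p‖ =
      (if p.1^2 + p.2^2 < k^2 then 2*π/(k*Real.sqrt (k^2 - (p.1^2+p.2^2))) else 0) := by
    intro p
    rw [hG_def]
    simp only [norm_mul, Complex.norm_real, Complex.norm_exp]
    have : (Complex.I * ((a:ℂ) * (p.1:ℂ))).re = 0 := by simp
    rw [this, Real.exp_zero, mul_one, Real.norm_eq_abs, _root_.abs_of_nonneg]
    positivity
  have hGint : Integrable G := by
    have hGm' : AEStronglyMeasurable G ((volume : Measure ℝ).prod volume) := by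
      rwa [← Measure.volume_eq_prod ℝ ℝ]
    rw [show (volume : Measure (ℝ × ℝ)) = (volume : Measure ℝ).prod volume from
      Measure.volume_eq_prod ℝ ℝ, integrable_prod_iff hGm']
    refine ⟨Eventually.of_forall fun u => ?_, ?_⟩
    ·
      have := (aux_inner k hk u).1
      have heq : (fun t => G (u, t)) = fun t =>
          ((if u^2 + t^2 < k^2 then 2*π/(k*Real.sqrt (k^2 - (u^2+t^2))) else 0 : ℝ) : ℂ) *
            Complex.exp (Complex.I * (a * u)) := by
        funext t; rw [hG_def]
      rw [heq]
      exact (this.ofReal).mul_const _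
    · have heq : (fun u => ∫ t, ‖G (u, t)‖) =
          Set.indicator (Set.Ioo (-k) k) (fun _ => 2*π^2/k) := by
        funext u
        have h1 : (fun t => ‖G (u, t)‖) = fun t =>
            (if u^2 + t^2 < k^2 then 2*π/(k*Real.sqrt (k^2 - (u^2+t^2))) else 0) := by
          funext t; exact hnormG (u, t)
        rw [h1, (aux_inner k hk u).2]
        by_cases hu : u ∈ Set.Ioo (-k) k
        · rw [Set.indicator_of_mem hu, if_pos (by rcases hu with ⟨h1', h2'⟩; nlinarith)]
        · rw [Set.indicator_of_notMem hu, if_neg]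
          intro h
          apply hu
          constructor <;> nlinarith
      rw [heq]
      rw [integrable_indicator_iff measurableSet_Ioo]
      exact integrableOn_const measure_Ioo_lt_top.ne
  -- Step 4: Fubini and inner integral
  have hfub : ∫ p : ℝ × ℝ, G p = ∫ u : ℝ, ∫ t : ℝ, G (u, t) := by
    rw [Measure.volume_eq_prod ℝ ℝ] at hGint ⊢
    exact integral_prod _ hGint
  have hinner_int : ∀ u : ℝ, ∫ t : ℝ, G (u, t) =
      ((if u^2 < k^2 then 2*π^2/k else 0 : ℝ) : ℂ) * Complex.exp (Complex.I * (a * u)) := by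
    intro u
    have heq : (fun t => G (u, t)) = fun t =>
        ((if u^2 + t^2 < k^2 then 2*π/(k*Real.sqrt (k^2 - (u^2+t^2))) else 0 : ℝ) : ℂ) *
          Complex.exp (Complex.I * (a * u)) := by
      funext t; rw [hG_def]
    rw [heq, integral_mul_const,
      show (∫ t : ℝ, ((if u^2 + t^2 < k^2 then 2*π/(k*Real.sqrt (k^2 - (u^2+t^2))) else 0 : ℝ) : ℂ))
        = ((∫ t : ℝ, (if u^2 + t^2 < k^2 then 2*π/(k*Real.sqrt (k^2 - (u^2+t^2))) else 0 : ℝ) : ℝ) : ℂ)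
        from integral_ofReal,
      (aux_inner k hk u).2]
  rw [hfub]
  have houter : (fun u : ℝ => ∫ t : ℝ, G (u, t)) =
      Set.indicator (Set.Ioo (-k) k)
        (fun u => ((2*π^2/k : ℝ) : ℂ) * Complex.exp (Complex.I * (a * u))) := by
    funext u
    rw [hinner_int u]
    by_cases hu : u ∈ Set.Ioo (-k) k
    · rw [Set.indicator_of_mem hu, if_pos (by rcases hu with ⟨h1', h2'⟩; nlinarith)]
    · rw [Set.indicator_of_notMem hu, if_neg (fun h => hu ⟨by nlinarith, by nlinarith⟩)]
      simp
  rw [houter, integral_indicator measurableSet_Ioo, ← integral_Ioc_eq_integral_Ioo,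
    ← intervalIntegral.integral_of_le (by linarith : -k ≤ k),
    intervalIntegral.integral_const_mul]
  have hexp : ∀ u : ℝ, Complex.I * (a * u) = (Complex.I * a) * u := by
    intro u; push_cast; ring
  simp only [hexp]
  by_cases ha : a = 0
  · simp only [ha, Complex.ofReal_zero, mul_zero, zero_mul, Complex.exp_zero]
    rw [intervalIntegral.integral_const]
    rw [j0, if_pos rfl]
    have hkC : (k:ℂ) ≠ 0 := by exact_mod_cast hk.ne'
    have hπC : (π:ℂ) ≠ 0 := by exact_mod_cast Real.pi_pos.ne'
    push_cast
    field_simp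
    rw [Complex.real_smul]; push_cast; ring
  · rw [integral_exp_mul_complex (by simp [Complex.I_ne_zero, ha])]
    have e1 : Complex.I * (a:ℝ) * (k:ℝ) = ((a*k : ℝ) : ℂ) * Complex.I := by push_cast; ring
    have e2 : Complex.I * (a:ℝ) * ((-k : ℝ):ℂ) = (-(a*k : ℝ) : ℂ) * Complex.I := by
      push_cast; ring
    rw [e1, e2, Complex.exp_mul_I, Complex.exp_mul_I]
    have hka : k * a ≠ 0 := mul_ne_zero hk.ne' ha
    rw [j0, if_neg hka]
    rw [Complex.cos_neg, Complex.sin_neg]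
    have hsin : Complex.sin ((a*k : ℝ) : ℂ) = ((Real.sin (a*k) : ℝ) : ℂ) :=
      (Complex.ofReal_sin _).symm
    push_cast [← Complex.ofReal_sin]
    have hkC : (k:ℂ) ≠ 0 := by exact_mod_cast hk.ne'
    have haC : (a:ℂ) ≠ 0 := by exact_mod_cast ha
    have hπC : (π:ℂ) ≠ 0 := by exact_mod_cast hπ.ne'
    rw [show Real.sin (k * a) = Real.sin (a * k) by rw [mul_comm]]
    field_simp
    rw [Complex.ofReal_sin, Complex.ofReal_mul, mul_comm (a:ℂ) (k:ℂ)]; ring
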